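/- The optimal value of the regularized square-root LASSO problem min over x in R^n of ||A x - b||_2 + sum_i λ_i |x_i| equals the optimal value of the dual problem: maximize -b^T u subject to ||u||_2 ≤ 1 and |a_i^T u| ≤ λ_i for all i, where a_i are the columns of A. -/

import Mathlib

noncomputable def norm2 {m : ℕ} (v : Fin m → ℝ) : ℝ := Real.sqrt (∑ k, v k ^ 2)
noncomputable def dot {m : ℕ} (u v : Fin m → ℝ) : ℝ := ∑ k, u k * v k

section helpers
variable {m : ℕ}

noncomputable def toE {m : ℕ} (v : Fin m → ℝ) : EuclideanSpace ℝ (Fin m) :=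
  (WithLp.equiv 2 (Fin m → ℝ)).symm v

lemma toE_apply (v : Fin m → ℝ) (i : Fin m) : toE v i = v i := rfl
lemma toE_add (v w : Fin m → ℝ) : toE (v + w) = toE v + toE w := rfl
lemma toE_smul (c : ℝ) (v : Fin m → ℝ) : toE (c • v) = c • toE v := rfl

lemma norm2_eq (v : Fin m → ℝ) : norm2 v = ‖toE v‖ := by
  rw [EuclideanSpace.norm_eq]
  simp [norm2, toE_apply, sq_abs]

lemma dot_eq (u v : Fin m → ℝ) : dot u v = inner ℝ (toE u) (toE v) := by
  simp [dot, PiLp.inner_apply, RCLike.inner_apply, conj_trivial, toE_apply]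
  exact Finset.sum_congr rfl fun k _ => mul_comm _ _

lemma norm2_nonneg (v : Fin m → ℝ) : 0 ≤ norm2 v := Real.sqrt_nonneg _

lemma norm2_zero : norm2 (0 : Fin m → ℝ) = 0 := by simp [norm2]

lemma dot_comm (u v : Fin m → ℝ) : dot u v = dot v u := by
  simp [dot, mul_comm]

lemma dot_self (v : Fin m → ℝ) : dot v v = norm2 v ^ 2 := by
  rw [dot_eq, norm2_eq, real_inner_self_eq_norm_sq]

lemma dot_cs (u v : Fin m → ℝ) : dot u v ≤ norm2 u * norm2 v := by
  rw [dot_eq, norm2_eq, norm2_eq]; exact real_inner_le_norm _ _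

lemma dot_add_right (u y z : Fin m → ℝ) : dot u (y + z) = dot u y + dot u z := by
  simp [dot, mul_add, Finset.sum_add_distrib]

lemma dot_sub_right (u y z : Fin m → ℝ) : dot u (y - z) = dot u y - dot u z := by
  simp [dot, mul_sub, Finset.sum_sub_distrib]

lemma dot_neg_right (u y : Fin m → ℝ) : dot u (-y) = -dot u y := by
  simp [dot, Finset.sum_neg_distrib]

lemma dot_neg_left (u y : Fin m → ℝ) : dot (-u) y = -dot u y := by
  simp [dot, Finset.sum_neg_distrib]

lemma dot_smul_right (u : Fin m → ℝ) (s : ℝ) (y : Fin m → ℝ) :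
    dot u (s • y) = s * dot u y := by
  simp [dot, Finset.mul_sum, mul_left_comm]

lemma norm2_smul (s : ℝ) (v : Fin m → ℝ) : norm2 (s • v) = |s| * norm2 v := by
  rw [norm2_eq, norm2_eq, toE_smul, norm_smul, Real.norm_eq_abs]

lemma norm2_neg (v : Fin m → ℝ) : norm2 (-v) = norm2 v := by
  have : -v = (-1 : ℝ) • v := by funext k; simp
  rw [this, norm2_smul]; simp

lemma aux_unbounded {c p δ : ℝ} (hδ : 0 < δ)
    (h : ∀ s : ℝ, 0 < s → p ≤ c - s * δ) : False := by
  have hs : 0 < (|c - p| + 1) / δ := by positivity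
  have h1 := h _ hs
  have h2 : c - p ≤ |c - p| := le_abs_self _
  rw [div_mul_cancel₀ _ (ne_of_gt hδ)] at h1
  linarith

end helpers

set_option maxHeartbeats 1000000 in
lemma strong_dual_exists {m n : ℕ} (A : Matrix (Fin m) (Fin n) ℝ) (b : Fin m → ℝ)
    (lam : Fin n → ℝ) (hlam : ∀ i, 0 ≤ lam i) :
    ∃ u : Fin m → ℝ, norm2 u ≤ 1 ∧ (∀ i, |dot (fun k => A k i) u| ≤ lam i) ∧
      sInf {v : ℝ | ∃ x : Fin n → ℝ, v = norm2 (A.mulVec x - b) + ∑ i, lam i * |x i|}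
        ≤ -(dot b u) := by
  classical
  set P := {v : ℝ | ∃ x : Fin n → ℝ, v = norm2 (A.mulVec x - b) + ∑ i, lam i * |x i|}
    with hPdef
  set p := sInf P with hpdef
  have hPne : P.Nonempty := ⟨_, 0, rfl⟩
  have hnonneg : ∀ x : Fin n → ℝ, 0 ≤ norm2 (A.mulVec x - b) + ∑ i, lam i * |x i| := by
    intro x
    have h1 := norm2_nonneg (A.mulVec x - b)
    have h2 : 0 ≤ ∑ i, lam i * |x i| :=
      Finset.sum_nonneg fun i _ => mul_nonneg (hlam i) (abs_nonneg _)
    linarith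
  have hPbdd : BddBelow P := ⟨0, by rintro v ⟨x, rfl⟩; exact hnonneg x⟩
  set S : Set (EuclideanSpace ℝ (Fin m) × ℝ) :=
    {q | ∃ x : Fin n → ℝ, ‖toE (A.mulVec x - b) + q.1‖ + ∑ i, lam i * |x i| < q.2} with hSdef
  have hSopen : IsOpen S := by
    have hS : S = ⋃ x : Fin n → ℝ,
        {q : EuclideanSpace ℝ (Fin m) × ℝ |
          ‖toE (A.mulVec x - b) + q.1‖ + ∑ i, lam i * |x i| < q.2} := by
      ext q; simp [hSdef, Set.mem_iUnion]
    rw [hS]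
    refine isOpen_iUnion fun x => ?_
    exact isOpen_lt (((continuous_const.add continuous_fst).norm).add continuous_const)
      continuous_snd
  have hSconv : Convex ℝ S := by
    rintro ⟨y1, t1⟩ ⟨x1, h1⟩ ⟨y2, t2⟩ ⟨x2, h2⟩ s t hs ht hst
    refine ⟨s • x1 + t • x2, ?_⟩
    simp only [Prod.smul_mk, Prod.mk_add_mk, smul_eq_mul] at h1 h2 ⊢
    have hvec : toE (A.mulVec (s • x1 + t • x2) - b) + (s • y1 + t • y2)
        = s • (toE (A.mulVec x1 - b) + y1) + t • (toE (A.mulVec x2 - b) + y2) := by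
      have hb : b = s • b + t • b := by rw [← add_smul, hst, one_smul]
      have hv2 : A.mulVec (s • x1 + t • x2) - b
          = s • (A.mulVec x1 - b) + t • (A.mulVec x2 - b) := by
        rw [Matrix.mulVec_add, Matrix.mulVec_smul, Matrix.mulVec_smul]
        nth_rewrite 1 [hb]
        module
      rw [hv2, toE_add, toE_smul, toE_smul]
      module
    have hn : ‖toE (A.mulVec (s • x1 + t • x2) - b) + (s • y1 + t • y2)‖
        ≤ s * ‖toE (A.mulVec x1 - b) + y1‖ + t * ‖toE (A.mulVec x2 - b) + y2‖ := by
      rw [hvec]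
      refine (norm_add_le _ _).trans ?_
      rw [norm_smul, norm_smul, Real.norm_eq_abs, Real.norm_eq_abs,
        abs_of_nonneg hs, abs_of_nonneg ht]
    have hsum : ∑ i, lam i * |(s • x1 + t • x2) i|
        ≤ s * ∑ i, lam i * |x1 i| + t * ∑ i, lam i * |x2 i| := by
      rw [Finset.mul_sum, Finset.mul_sum, ← Finset.sum_add_distrib]
      refine Finset.sum_le_sum fun i _ => ?_
      have habs : |(s • x1 + t • x2) i| ≤ s * |x1 i| + t * |x2 i| := by
        simp only [Pi.add_apply, Pi.smul_apply, smul_eq_mul]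
        calc |s * x1 i + t * x2 i| ≤ |s * x1 i| + |t * x2 i| := abs_add_le _ _
          _ = s * |x1 i| + t * |x2 i| := by
              rw [abs_mul, abs_mul, abs_of_nonneg hs, abs_of_nonneg ht]
      calc lam i * |(s • x1 + t • x2) i| ≤ lam i * (s * |x1 i| + t * |x2 i|) :=
            mul_le_mul_of_nonneg_left habs (hlam i)
        _ = s * (lam i * |x1 i|) + t * (lam i * |x2 i|) := by ring
    have hcomb : s * (‖toE (A.mulVec x1 - b) + y1‖ + ∑ i, lam i * |x1 i|)
        + t * (‖toE (A.mulVec x2 - b) + y2‖ + ∑ i, lam i * |x2 i|) < s * t1 + t * t2 := by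
      rcases eq_or_lt_of_le hs with hs0 | hs0
      · have ht1 : t = 1 := by linarith
        rw [← hs0, ht1]; simpa using h2
      · rcases eq_or_lt_of_le ht with ht0 | ht0
        · have hs1 : s = 1 := by linarith
          rw [← ht0, hs1]; simpa using h1
        · have c1 := mul_lt_mul_of_pos_left h1 hs0
          have c2 := mul_lt_mul_of_pos_left h2 ht0
          linarith
    have := hsum
    nlinarith [hn, hsum, hcomb]
  have h0 : ((0 : EuclideanSpace ℝ (Fin m)), p) ∉ S := by
    rintro ⟨x, hx⟩
    rw [add_zero, ← norm2_eq] at hx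
    exact absurd (csInf_le hPbdd ⟨x, rfl⟩) (not_le.mpr hx)
  obtain ⟨φ, hφ⟩ := geometric_hahn_banach_point_open hSconv hSopen h0
  set α := φ (0, 1) with hαdef
  set g : EuclideanSpace ℝ (Fin m) → ℝ := fun y => φ (y, 0) with hgdef
  have hφeq : ∀ (y : EuclideanSpace ℝ (Fin m)) (c : ℝ), φ (y, c) = g y + c * α := by
    intro y c
    have hyc : (y, c) = (y, (0 : ℝ)) + c • ((0 : EuclideanSpace ℝ (Fin m)), (1 : ℝ)) := by
      simp [Prod.ext_iff]
    rw [hyc, map_add, map_smul, smul_eq_mul]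
  have hg0 : g (0 : EuclideanSpace ℝ (Fin m)) = 0 := map_zero φ
  have hφ0 : φ ((0 : EuclideanSpace ℝ (Fin m)), p) = p * α := by
    rw [hφeq, hg0, zero_add]
  have hαpos : 0 < α := by
    obtain ⟨v, hvP, hvlt⟩ := exists_lt_of_csInf_lt hPne (lt_add_one p)
    obtain ⟨x, rfl⟩ := hvP
    have hmem : ((0 : EuclideanSpace ℝ (Fin m)), p + 1) ∈ S :=
      ⟨x, by rw [add_zero, ← norm2_eq]; exact hvlt⟩
    have hlt := hφ _ hmem
    rw [hφ0, hφeq, hg0, zero_add] at hlt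
    nlinarith
  have hαne : α ≠ 0 := ne_of_gt hαpos
  have hmain : ∀ (x : Fin n → ℝ) (y : EuclideanSpace ℝ (Fin m)),
      p * α ≤ g y + (‖toE (A.mulVec x - b) + y‖ + ∑ i, lam i * |x i|) * α := by
    intro x y
    refine le_of_forall_pos_lt_add fun ε hε => ?_
    have hmem : (y, (‖toE (A.mulVec x - b) + y‖ + ∑ i, lam i * |x i|) + ε / α) ∈ S :=
      ⟨x, by have : 0 < ε / α := div_pos hε hαpos; linarith⟩
    have hlt := hφ _ hmem
    rw [hφ0, hφeq] at hlt
    have hcan : ε / α * α = ε := div_mul_cancel₀ _ hαne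
    nlinarith [hlt]
  -- the dual vector
  set u : Fin m → ℝ := fun k => g (toE (Pi.single k 1)) / α with hudef
  have hudot : ∀ y : Fin m → ℝ, dot u y = g (toE y) / α := by
    intro y
    have hψ : g (toE y) = ∑ k, y k * g (toE (Pi.single k 1)) := by
      set ψ : (Fin m → ℝ) →ₗ[ℝ] ℝ :=
        { toFun := fun z => g (toE z)
          map_add' := by
            intro a c
            show φ (toE (a + c), 0) = φ (toE a, 0) + φ (toE c, 0)
            rw [toE_add]
            rw [show ((toE a + toE c : EuclideanSpace ℝ (Fin m)), (0:ℝ))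
                = (toE a, (0:ℝ)) + (toE c, (0:ℝ)) by simp [Prod.ext_iff], map_add]
          map_smul' := by
            intro r a
            show φ (toE (r • a), 0) = r * φ (toE a, 0)
            rw [toE_smul]
            rw [show ((r • toE a : EuclideanSpace ℝ (Fin m)), (0:ℝ))
                = r • (toE a, (0:ℝ)) by simp [Prod.ext_iff], map_smul, smul_eq_mul] } with hψdef
      have := LinearMap.pi_apply_eq_sum_univ ψ y
      simp only [hψdef, LinearMap.coe_mk, AddHom.coe_mk] at this
      rw [this]
      refine Finset.sum_congr rfl fun k _ => ?_
      have hsingle : (fun j => if k = j then (1:ℝ) else 0) = Pi.single k 1 := by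
        funext j; rw [Pi.single_apply]; exact if_congr eq_comm rfl rfl
      rw [smul_eq_mul, hsingle]
    rw [hψ, hudef]
    simp only [dot]
    rw [Finset.sum_div]
    refine Finset.sum_congr rfl fun k _ => ?_
    ring
  have hRel : ∀ (x : Fin n → ℝ) (y : Fin m → ℝ),
      p ≤ dot u y + (norm2 (A.mulVec x - b + y) + ∑ i, lam i * |x i|) := by
    intro x y
    have hkey := hmain x (toE y)
    rw [norm2_eq, toE_add, hudot y]
    rw [← mul_le_mul_iff_of_pos_right hαpos]
    have hcan : g (toE y) / α * α = g (toE y) := div_mul_cancel₀ _ hαne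
    nlinarith [hkey]
  -- norm bound
  have hub : p ≤ dot u b := by
    have h := hRel 0 b
    rw [Matrix.mulVec_zero, zero_sub, neg_add_cancel, norm2_zero] at h
    simpa using h
  have hNle : norm2 u ≤ 1 := by
    by_contra hN
    push_neg at hN
    have key : ∀ s : ℝ, 0 < s → p ≤ dot u b - s * (norm2 u ^ 2 - norm2 u) := by
      intro s hs
      have h := hRel 0 (b + (-s) • u)
      rw [Matrix.mulVec_zero] at h
      have e1 : (0 : Fin m → ℝ) - b + (b + (-s) • u) = (-s) • u := by abel
      rw [e1, norm2_smul, dot_add_right, dot_smul_right, dot_self] at h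
      have habs : |(-s)| = s := by rw [abs_neg, abs_of_pos hs]
      rw [habs] at h
      simp only [Pi.zero_apply, abs_zero, mul_zero, Finset.sum_const_zero, add_zero] at h
      have hring : s * (norm2 u ^ 2 - norm2 u) = s * norm2 u ^ 2 - s * norm2 u := by ring
      nlinarith [h]
    exact aux_unbounded (by nlinarith) key
  -- column bounds
  have hcol : ∀ i, |dot u (fun k => A k i)| ≤ lam i := by
    intro i
    by_contra hD
    push_neg at hD
    set D := dot u (fun k => A k i) with hDdef
    have key : ∀ s : ℝ, 0 < s → p ≤ dot u b - s * (|D| - lam i) := by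
      intro s hs
      set t : ℝ := if 0 ≤ D then s else -s with htdef
      have habs : |t| = s := by
        by_cases hsign : 0 ≤ D
        · rw [htdef, if_pos hsign, abs_of_pos hs]
        · rw [htdef, if_neg hsign, abs_neg, abs_of_pos hs]
      have htD : t * D = s * |D| := by
        by_cases hsign : 0 ≤ D
        · rw [htdef, if_pos hsign, abs_of_nonneg hsign]
        · rw [htdef, if_neg hsign, abs_of_neg (lt_of_not_ge hsign)]; ring
      set x0 : Fin n → ℝ := t • (Pi.single (M := fun _ : Fin n => ℝ) i 1) with hx0
      have h := hRel x0 (b - A.mulVec x0)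
      have e1 : A.mulVec x0 - b + (b - A.mulVec x0) = 0 := by
        abel
      rw [e1, norm2_zero, dot_sub_right] at h
      have e2 : dot u (A.mulVec x0) = t * D := by
        rw [hx0]
        rw [Matrix.mulVec_smul, dot_smul_right]
        congr 1
        rw [hDdef]
        congr 1
        rw [Matrix.mulVec_single]
        funext k; simp [Matrix.col]
      have e3 : ∑ i', lam i' * |x0 i'| = lam i * s := by
        rw [hx0]
        rw [Finset.sum_eq_single i]
        · simp [Pi.single_apply, habs]
        · intro j _ hj
          simp [Pi.single_apply, Ne.symm hj]
        · intro hni; exact absurd (Finset.mem_univ i) hni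
      rw [e2, e3, htD] at h
      have hring : s * (|D| - lam i) = s * |D| - lam i * s := by ring
      linarith
    exact aux_unbounded (by linarith) key
  refine ⟨-u, ?_, ?_, ?_⟩
  · rw [norm2_neg]; exact hNle
  · intro i
    rw [dot_comm, dot_neg_left, abs_neg]
    exact hcol i
  · have hv : -dot b (-u) = dot u b := by rw [dot_neg_right, neg_neg, dot_comm]
    rw [hv]
    exact hub

lemma weak_dual {m n : ℕ} (A : Matrix (Fin m) (Fin n) ℝ) (b : Fin m → ℝ)
    (lam : Fin n → ℝ) (u : Fin m → ℝ) (hu1 : norm2 u ≤ 1)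
    (hu2 : ∀ i, |dot (fun k => A k i) u| ≤ lam i) (x : Fin n → ℝ) :
    -(dot b u) ≤ norm2 (A.mulVec x - b) + ∑ i, lam i * |x i| := by
  have h1 : dot u (A.mulVec x - b) ≤ norm2 (A.mulVec x - b) := by
    calc dot u (A.mulVec x - b) ≤ norm2 u * norm2 (A.mulVec x - b) := dot_cs _ _
      _ ≤ 1 * norm2 (A.mulVec x - b) :=
          mul_le_mul_of_nonneg_right hu1 (norm2_nonneg _)
      _ = norm2 (A.mulVec x - b) := one_mul _
  have h2 : dot u (A.mulVec x) = ∑ i, dot (fun k => A k i) u * x i := by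
    simp only [dot, Matrix.mulVec, dotProduct, Finset.mul_sum, Finset.sum_mul]
    rw [Finset.sum_comm]
    exact Finset.sum_congr rfl fun i _ => Finset.sum_congr rfl fun k _ => by ring
  have h3 : -(dot u (A.mulVec x)) ≤ ∑ i, lam i * |x i| := by
    rw [h2, ← Finset.sum_neg_distrib]
    refine Finset.sum_le_sum fun i _ => ?_
    calc -(dot (fun k => A k i) u * x i) ≤ |dot (fun k => A k i) u * x i| := neg_le_abs _
      _ = |dot (fun k => A k i) u| * |x i| := abs_mul _ _
      _ ≤ lam i * |x i| := mul_le_mul_of_nonneg_right (hu2 i) (abs_nonneg _)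
  have h4 : dot u (A.mulVec x - b) = dot u (A.mulVec x) - dot u b := dot_sub_right _ _ _
  have h5 : dot b u = dot u b := dot_comm _ _
  linarith

theorem rsqrtLASSO_strong_duality {m n : ℕ}
    (A : Matrix (Fin m) (Fin n) ℝ) (b : Fin m → ℝ)
    (lam : Fin n → ℝ) (hlam : ∀ i, 0 ≤ lam i) :
    sInf {v : ℝ | ∃ x : Fin n → ℝ,
        v = norm2 (A.mulVec x - b) + ∑ i, lam i * |x i|}
      = sSup {v : ℝ | ∃ u : Fin m → ℝ, norm2 u ≤ 1 ∧
          (∀ i, |dot (fun k => A k i) u| ≤ lam i) ∧ v = -(dot b u)} := by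
  obtain ⟨u0, hu1, hu2, hu3⟩ := strong_dual_exists A b lam hlam
  set P := {v : ℝ | ∃ x : Fin n → ℝ,
      v = norm2 (A.mulVec x - b) + ∑ i, lam i * |x i|} with hPdef
  set D := {v : ℝ | ∃ u : Fin m → ℝ, norm2 u ≤ 1 ∧
      (∀ i, |dot (fun k => A k i) u| ≤ lam i) ∧ v = -(dot b u)} with hDdef
  have hPne : P.Nonempty := ⟨_, 0, rfl⟩
  have hDne : D.Nonempty := ⟨_, u0, hu1, hu2, rfl⟩
  have hDub : ∀ v ∈ D, ∀ w ∈ P, v ≤ w := by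
    rintro v ⟨u, h1, h2, rfl⟩ w ⟨x, rfl⟩
    exact weak_dual A b lam u h1 h2 x
  apply le_antisymm
  · refine le_trans hu3 (le_csSup ?_ ⟨u0, hu1, hu2, rfl⟩)
    exact ⟨_, fun v hv => hDub v hv _ ⟨0, rfl⟩⟩
  · exact csSup_le hDne fun v hv => le_csInf hPne fun w hw => hDub v hv w hw
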